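/- Let X, Y, A, B, C, D, a1, a2 be points on the 2-sphere (in general position, with all relevant pairs non-antipodal). Suppose the geodesic edge XY crosses AC at a1 and crosses AD at a2, with a1 lying between X and a2 on XY. If moreover XY crosses BD and BX crosses AD, then BX crosses AC. -/

import Mathlib

noncomputable section

/-- Points of `ℝ³`. -/
abbrev E3 := EuclideanSpace ℝ (Fin 3)

/-- The interior of the shortest geodesic arc joining `X` and `Y` on the unit
sphere: normalizations of strictly positive combinations of `X` and `Y`. -/
def ArcInt (X Y : E3) : Set E3 :=
  {z | ∃ a b : ℝ, 0 < a ∧ 0 < b ∧ z = ‖a • X + b • Y‖⁻¹ • (a • X + b • Y)}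

/-- Two geodesic edges `XY` and `ZW` cross if they share a point interior to both. -/
def Crosses (X Y Z W : E3) : Prop := (ArcInt X Y ∩ ArcInt Z W).Nonempty

lemma scale_eq {u v : E3} (hu : u ≠ 0) (h : ‖v‖⁻¹ • v = ‖u‖⁻¹ • u) :
    ∃ r : ℝ, 0 < r ∧ v = r • u := by
  have hnu : (0:ℝ) < ‖u‖ := norm_pos_iff.mpr hu
  have hv : v ≠ 0 := by
    intro h0
    rw [h0] at h
    simp only [norm_zero, smul_zero, inv_zero, zero_smul] at h
    have : u = 0 := by
      have h' := congrArg (fun z => ‖u‖ • z) h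
      simpa [smul_smul, mul_inv_cancel₀ hnu.ne', eq_comm] using h'
    exact hu this
  have hnv : (0:ℝ) < ‖v‖ := norm_pos_iff.mpr hv
  refine ⟨‖v‖ * ‖u‖⁻¹, by positivity, ?_⟩
  calc v = ‖v‖ • (‖v‖⁻¹ • v) := by
        rw [smul_smul, mul_inv_cancel₀ hnv.ne', one_smul]
    _ = ‖v‖ • (‖u‖⁻¹ • u) := by rw [h]
    _ = (‖v‖ * ‖u‖⁻¹) • u := by rw [smul_smul]

/-- Let `X = p 0`, `Y = p 1`, `A = p 2`, `B = p 3`, `C = p 4`, `D = p 5` be points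
on the unit sphere in general position (no three on a common great circle).
Suppose the geodesic edge `XY` crosses `AC` at `a₁` and crosses `AD` at `a₂`,
with `a₁` lying strictly between `X` and `a₂` along `XY`.  If moreover `XY`
crosses `BD` and `BX` crosses `AD`, then `BX` crosses `AC`. -/
theorem four_intersections (p : Fin 6 → E3) (a₁ a₂ : E3)
    (hUnit : ∀ i, ‖p i‖ = 1)
    (hGP : ∀ i j k : Fin 6, i ≠ j → i ≠ k → j ≠ k →
      LinearIndependent ℝ ![p i, p j, p k])
    (ha₁ : a₁ ∈ ArcInt (p 0) (p 1) ∧ a₁ ∈ ArcInt (p 2) (p 4))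
    (ha₂ : a₂ ∈ ArcInt (p 0) (p 1) ∧ a₂ ∈ ArcInt (p 2) (p 5))
    (hbetween : a₁ ∈ ArcInt (p 0) a₂)
    (hXYBD : Crosses (p 0) (p 1) (p 3) (p 5))
    (hBXAD : Crosses (p 3) (p 0) (p 2) (p 5)) :
    Crosses (p 3) (p 0) (p 2) (p 4) := by
  have hXYA : LinearIndependent ℝ ![p 0, p 1, p 2] :=
    hGP 0 1 2 (by decide) (by decide) (by decide)
  have hcard : Fintype.card (Fin 3) = Module.finrank ℝ E3 := by
    simp [finrank_euclideanSpace]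
  obtain ⟨𝔅, h𝔅⟩ : ∃ B : Module.Basis (Fin 3) ℝ E3, ∀ i, B i = ![p 0, p 1, p 2] i :=
    ⟨basisOfLinearIndependentOfCardEqFinrank hXYA hcard, fun i => by
      rw [coe_basisOfLinearIndependentOfCardEqFinrank]⟩
  have hXr : 𝔅.repr (p 0) = Finsupp.single 0 1 := by
    have h : 𝔅 0 = p 0 := h𝔅 0
    rw [← h, Module.Basis.repr_self]
  have hYr : 𝔅.repr (p 1) = Finsupp.single 1 1 := by
    have h : 𝔅 1 = p 1 := h𝔅 1
    rw [← h, Module.Basis.repr_self]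
  have hAr : 𝔅.repr (p 2) = Finsupp.single 2 1 := by
    have h : 𝔅 2 = p 2 := h𝔅 2
    rw [← h, Module.Basis.repr_self]
  have ne_of_coord : ∀ (v : E3) (j : Fin 3), 𝔅.repr v j ≠ 0 → v ≠ 0 := by
    intro v j h hv
    rw [hv] at h
    simp at h
  -- names for coordinates of B = p 3, C = p 4, D = p 5
  -- b_i = 𝔅.repr (p 3) i, c_i = 𝔅.repr (p 4) i, d_i = 𝔅.repr (p 5) i
  -- Equation E1: a₁ on XY and on AC
  obtain ⟨α₁, β₁, hα₁, hβ₁, ha11⟩ := ha₁.1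
  obtain ⟨γ₁, δ₁, hγ₁, hδ₁, ha12⟩ := ha₁.2
  have hu₁ : α₁ • p 0 + β₁ • p 1 ≠ 0 := by
    apply ne_of_coord _ 0
    simp [map_add, map_smul, hXr, hYr, Finsupp.single_apply]
    positivity
  obtain ⟨r₁, hr₁, hE1⟩ := scale_eq hu₁ (ha12.symm.trans ha11)
  have e10 := congrArg (fun z => 𝔅.repr z 0) hE1
  have e11 := congrArg (fun z => 𝔅.repr z 1) hE1
  have e12 := congrArg (fun z => 𝔅.repr z 2) hE1
  simp [map_add, map_smul, hXr, hYr, hAr, Finsupp.single_apply] at e10 e11 e12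
  -- Equation E2: a₂ on XY and on AD
  obtain ⟨α₂, β₂, hα₂, hβ₂, ha21⟩ := ha₂.1
  obtain ⟨γ₂, δ₂, hγ₂, hδ₂, ha22⟩ := ha₂.2
  have hu₂ : α₂ • p 0 + β₂ • p 1 ≠ 0 := by
    apply ne_of_coord _ 0
    simp [map_add, map_smul, hXr, hYr, Finsupp.single_apply]
    positivity
  obtain ⟨r₂, hr₂, hE2⟩ := scale_eq hu₂ (ha22.symm.trans ha21)
  have e20 := congrArg (fun z => 𝔅.repr z 0) hE2
  have e21 := congrArg (fun z => 𝔅.repr z 1) hE2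
  have e22 := congrArg (fun z => 𝔅.repr z 2) hE2
  simp [map_add, map_smul, hXr, hYr, hAr, Finsupp.single_apply] at e20 e21 e22
  -- Equation E3: betweenness
  obtain ⟨s, t, hs, ht, hw⟩ := hbetween
  rw [ha21] at hw
  have hN2 : (0:ℝ) < ‖α₂ • p 0 + β₂ • p 1‖⁻¹ :=
    inv_pos.mpr (norm_pos_iff.mpr hu₂)
  have hwne : s • p 0 + t • (‖α₂ • p 0 + β₂ • p 1‖⁻¹ • (α₂ • p 0 + β₂ • p 1)) ≠ 0 := by
    apply ne_of_coord _ 1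
    simp [map_add, map_smul, hXr, hYr, Finsupp.single_apply]
    exact ⟨ht.ne', hu₂, hβ₂.ne'⟩
  obtain ⟨r₃, hr₃, hE3⟩ := scale_eq hwne (ha11.symm.trans hw)
  have f30 := congrArg (fun z => 𝔅.repr z 0) hE3
  have f31 := congrArg (fun z => 𝔅.repr z 1) hE3
  simp [map_add, map_smul, hXr, hYr, Finsupp.single_apply] at f30 f31
  -- Equation E4: XY crosses BD
  obtain ⟨z₄, hz41, hz42⟩ := hXYBD
  obtain ⟨e, f, he, hf, hz41'⟩ := hz41
  obtain ⟨g, h, hg, hh, hz42'⟩ := hz42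
  have hu₄ : e • p 0 + f • p 1 ≠ 0 := by
    apply ne_of_coord _ 0
    simp [map_add, map_smul, hXr, hYr, Finsupp.single_apply]
    positivity
  obtain ⟨r₄, hr₄, hE4⟩ := scale_eq hu₄ (hz42'.symm.trans hz41')
  have g42 := congrArg (fun z => 𝔅.repr z 2) hE4
  simp [map_add, map_smul, hXr, hYr, hAr, Finsupp.single_apply] at g42
  -- generalize the coordinates of B = p 3, C = p 4, D = p 5 to opaque variables
  obtain ⟨B0, B1, B2, hB0e, hB1e, hB2e⟩ :
      ∃ x y z : ℝ, (𝔅.repr (p 3)) 0 = x ∧ (𝔅.repr (p 3)) 1 = y ∧ (𝔅.repr (p 3)) 2 = z :=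
    ⟨_, _, _, rfl, rfl, rfl⟩
  obtain ⟨C0, C1, C2, hC0e, hC1e, hC2e⟩ :
      ∃ x y z : ℝ, (𝔅.repr (p 4)) 0 = x ∧ (𝔅.repr (p 4)) 1 = y ∧ (𝔅.repr (p 4)) 2 = z :=
    ⟨_, _, _, rfl, rfl, rfl⟩
  obtain ⟨D0, D1, D2, hD0e, hD1e, hD2e⟩ :
      ∃ x y z : ℝ, (𝔅.repr (p 5)) 0 = x ∧ (𝔅.repr (p 5)) 1 = y ∧ (𝔅.repr (p 5)) 2 = z :=
    ⟨_, _, _, rfl, rfl, rfl⟩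
  simp only [hB0e, hB1e, hB2e, hC0e, hC1e, hC2e, hD0e, hD1e, hD2e]
    at e10 e11 e12 e20 e21 e22 g42
  -- basic signs of coordinates of C and D
  have hc1 : 0 < C0 := by
    clear * - e10 hr₁ hα₁ hδ₁; nlinarith [mul_pos hr₁ hα₁]
  have hc2 : 0 < C1 := by
    clear * - e11 hr₁ hβ₁ hδ₁; nlinarith [mul_pos hr₁ hβ₁]
  have hc3 : C2 < 0 := by
    clear * - e12 hγ₁ hδ₁; nlinarith
  have hd1 : 0 < D0 := by
    clear * - e20 hr₂ hα₂ hδ₂; nlinarith [mul_pos hr₂ hα₂]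
  have hd2 : 0 < D1 := by
    clear * - e21 hr₂ hβ₂ hδ₂; nlinarith [mul_pos hr₂ hβ₂]
  have hd3 : D2 < 0 := by
    clear * - e22 hγ₂ hδ₂; nlinarith
  -- b3 > 0 from E4
  have hb3 : 0 < B2 := by
    clear * - g42 hg hh hd3
    nlinarith [mul_pos hh (neg_pos.mpr hd3)]
  -- betweenness: α₁ β₂ > α₂ β₁, hence c1 d2 > c2 d1
  have key1 : α₁ * β₂ - α₂ * β₁ = r₃ * s * β₂ := by
    linear_combination β₂ * f30 - α₂ * f31
  have key1' : 0 < α₁ * β₂ - α₂ * β₁ := by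
    rw [key1]; positivity
  have key2id : δ₁ * δ₂ * (C0 * D1
      - C1 * D0)
      = r₁ * r₂ * (α₁ * β₂ - α₂ * β₁) := by
    linear_combination (δ₂ * D1) * e10 + (r₁ * α₁) * e21
      - (δ₂ * D0) * e11 - (r₁ * β₁) * e20
  have key2 : 0 < C0 * D1
      - C1 * D0 := by
    clear * - key2id key1' hr₁ hr₂ hδ₁ hδ₂
    nlinarith [mul_pos (mul_pos hr₁ hr₂) key1', mul_pos hδ₁ hδ₂]
  -- Equation E5: BX crosses AD
  obtain ⟨z₅, hz51, hz52⟩ := hBXAD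
  obtain ⟨i, j, hi, hj, hz51'⟩ := hz51
  obtain ⟨k, l, hk', hl, hz52'⟩ := hz52
  have hu₅ : i • p 3 + j • p 0 ≠ 0 := by
    apply ne_of_coord _ 2
    have hco : 𝔅.repr (i • p 3 + j • p 0) 2 = i * B2 := by
      simp [map_add, map_smul, hXr, Finsupp.single_apply, hB2e]
    rw [hco]
    exact (mul_pos hi hb3).ne'
  obtain ⟨r₅, hr₅, hE5⟩ := scale_eq hu₅ (hz52'.symm.trans hz51')
  have g50 := congrArg (fun z => 𝔅.repr z 0) hE5
  have g51 := congrArg (fun z => 𝔅.repr z 1) hE5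
  simp [map_add, map_smul, hXr, hYr, hAr, Finsupp.single_apply] at g50 g51
  simp only [hB0e, hB1e, hB2e, hD0e, hD1e, hD2e] at g50 g51
  -- b2 > 0
  have hb2 : 0 < B1 := by
    clear * - g51 hl hd2 hr₅ hi
    nlinarith [mul_pos hl hd2, mul_pos hr₅ hi]
  -- b1 d2 < b2 d1
  have T5 : l * (i * (B1 * D0
      - B0 * D1)) = j * (l * D1) := by
    linear_combination (i * B1) * g50 - (i * B0 + j) * g51
  have hbd : B0 * D1
      < B1 * D0 := by
    clear * - T5 hj hl hd2 hi
    nlinarith [mul_pos (mul_pos hj hl) hd2, mul_pos hi hl]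
  -- final inequality: c1 b2 > c2 b1
  have hn : 0 < B1 * C0
      - C1 * B0 := by
    clear * - key2 hb2 hbd hc2 hd2
    nlinarith [mul_pos key2 hb2, mul_pos (sub_pos.mpr hbd) hc2]
  have ho : 0 < C1 * B2
      - B1 * C2 := by
    clear * - hc2 hb3 hb2 hc3
    nlinarith [mul_pos hc2 hb3, mul_pos hb2 (neg_pos.mpr hc3)]
  -- the crossing point of BX and AC
  have hvec : C1 • p 3
      + (B1 * C0 - C1 * B0) • p 0
      = (C1 * B2 - B1 * C2) • p 2
      + B1 • p 4 := by
    refine 𝔅.ext_elem fun jj => ?_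
    fin_cases jj <;>
      simp [map_add, map_smul, hXr, hAr, Finsupp.single_apply,
        hB0e, hB1e, hB2e, hC0e, hC1e, hC2e] <;> ring
  refine ⟨_, ⟨C1,
    B1 * C0 - C1 * B0,
    hc2, hn, rfl⟩,
    C1 * B2 - B1 * C2,
    B1, ho, hb2, ?_⟩
  rw [hvec]

end
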